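/- For every n ∈ ℕ there exists a Boolean function f : {0,1}^n × {0,1}^n → {0,1} whose garden-hose complexity s = GH(f) satisfies (s+1) · log₂(s+1) ≥ 2^{n−1}; in particular there exist functions with exponential garden-hose complexity. -/

import Mathlib

/-- A partial matching on the vertex type `V`, encoded by a partner function:
`m i = some j` means that there is an edge between `i` and `j`;
the graph `{ {i,j} | m i = some j }` then has maximum degree at most `1`
and no self-loops. -/
def IsPartialMatching {V : Type*} (m : V → Option V) : Prop :=
  ∀ i j, m i = some j → i ≠ j ∧ m j = some i

/-- The position of the water in a garden-hose game with `s` pipes: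
`atAlice i` (resp. `atBob i`) means the water has just arrived at Alice's
(resp. Bob's) end of pipe `i`; `exitA` / `exitB` mean the water has exited
on Alice's / Bob's side, i.e. the maximal path starting at the tap has ended
in `A∘` / in `B`. -/
inductive GHState (s : ℕ) where
  | atAlice : Fin s → GHState s
  | atBob : Fin s → GHState s
  | exitA : GHState s
  | exitB : GHState s
  deriving DecidableEq

/-- Vertex `k` of `A∘ = {0, 1, ..., s}` viewed as a pipe: vertex `0` is the water
tap (no pipe), and vertex `i + 1` is Alice's end of pipe `i`. -/
def toPipe {s : ℕ} (k : Fin (s + 1)) : Option (Fin s) :=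
  if h : (k : ℕ) = 0 then none
  else some ⟨(k : ℕ) - 1, by have := k.isLt; omega⟩

/-- One step of the water flow, given Alice's connections `a` on `A∘ = {0,...,s}`
and Bob's connections `b` on `B = {1,...,s}` (indexed by pipes `Fin s`). -/
def ghStep {s : ℕ} (a : Fin (s + 1) → Option (Fin (s + 1)))
    (b : Fin s → Option (Fin s)) : GHState s → GHState s
  | GHState.atAlice i =>
    match a i.succ with
    | none => GHState.exitA
    | some k =>
      match toPipe k with
      | none => GHState.exitA
      | some p => GHState.atBob p
  | GHState.atBob i =>
    match b i with
    | none => GHState.exitB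
    | some j => GHState.atAlice j
  | GHState.exitA => GHState.exitA
  | GHState.exitB => GHState.exitB

/-- The start of the water flow: the tap (vertex `0` of `A∘`) is connected by
Alice to at most one pipe. -/
def ghStart {s : ℕ} (a : Fin (s + 1) → Option (Fin (s + 1))) : GHState s :=
  match a 0 with
  | none => GHState.exitA
  | some k =>
    match toPipe k with
    | none => GHState.exitA
    | some p => GHState.atBob p

/-- The endpoint of the maximal path `π(x,y)` starting at the tap: since the graph
has maximum degree `2` and the path is simple, it is reached after at most
`2s + 2` steps. -/
def ghResult {s : ℕ} (a : Fin (s + 1) → Option (Fin (s + 1)))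
    (b : Fin s → Option (Fin s)) : GHState s :=
  (ghStep a b)^[2 * s + 2] (ghStart a)

/-- A garden-hose game of size `s` on inputs `{0,1}^n × {0,1}^n`: for every input
`x` Alice chooses a partial matching `EA x` on `A∘ = {0,1,…,s}` and for every
input `y` Bob chooses a partial matching `EB y` on `B = {1,…,s}`. -/
structure GHGame (n s : ℕ) where
  EA : (Fin n → Bool) → Fin (s + 1) → Option (Fin (s + 1))
  EB : (Fin n → Bool) → Fin s → Option (Fin s)
  matchA : ∀ x, IsPartialMatching (EA x)
  matchB : ∀ y, IsPartialMatching (EB y)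

/-- Where the water exits on input `(x, y)`. -/
def GHGame.run {n s : ℕ} (G : GHGame n s) (x y : Fin n → Bool) : GHState s :=
  ghResult (G.EA x) (G.EB y)

/-- The game `G` computes `f` if for all inputs the maximal path from the tap ends
in `A∘` whenever `f x y = 0` (water exits on Alice's side) and in `B` whenever
`f x y = 1` (water exits on Bob's side). -/
def GHGame.Computes {n s : ℕ} (G : GHGame n s)
    (f : (Fin n → Bool) → (Fin n → Bool) → Bool) : Prop :=
  ∀ x y, G.run x y = if f x y then GHState.exitB else GHState.exitA

/-- The garden-hose complexity of `f`: the minimal number of pipes of a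
garden-hose game computing `f`. -/
noncomputable def GH {n : ℕ} (f : (Fin n → Bool) → (Fin n → Bool) → Bool) : ℕ :=
  sInf {s : ℕ | ∃ G : GHGame n s, G.Computes f}

section Aux

lemma ghStep_exitA {s : ℕ} (a : Fin (s+1) → Option (Fin (s+1))) (b : Fin s → Option (Fin s)) :
    ghStep a b GHState.exitA = GHState.exitA := rfl

lemma ghStep_exitB {s : ℕ} (a : Fin (s+1) → Option (Fin (s+1))) (b : Fin s → Option (Fin s)) :
    ghStep a b GHState.exitB = GHState.exitB := rfl

lemma ghStart_eq_atBob {s : ℕ} {a : Fin (s+1) → Option (Fin (s+1))} {k : Fin (s+1)} {p : Fin s}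
    (h : a 0 = some k) (hk : toPipe k = some p) : ghStart a = GHState.atBob p := by
  simp [ghStart, h, hk]

lemma ghResult_exitB_of {s : ℕ} {a : Fin (s+1) → Option (Fin (s+1))} {b : Fin s → Option (Fin s)}
    {p : Fin s} (h0 : ghStart a = GHState.atBob p) (h1 : b p = none) :
    ghResult a b = GHState.exitB := by
  have hstep : ghStep a b (GHState.atBob p) = GHState.exitB := by
    simp [ghStep, h1]
  unfold ghResult
  rw [h0, show 2*s+2 = (2*s+1)+1 from rfl, Function.iterate_succ_apply, hstep]
  exact Function.iterate_fixed rfl _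

lemma ghResult_exitA_of {s : ℕ} {a : Fin (s+1) → Option (Fin (s+1))} {b : Fin s → Option (Fin s)}
    {p q : Fin s} (h0 : ghStart a = GHState.atBob p) (h1 : b p = some q)
    (h2 : a q.succ = none) : ghResult a b = GHState.exitA := by
  have hstep1 : ghStep a b (GHState.atBob p) = GHState.atAlice q := by
    simp [ghStep, h1]
  have hstep2 : ghStep a b (GHState.atAlice q) = GHState.exitA := by
    simp [ghStep, h2]
  unfold ghResult
  rw [h0, show 2*s+2 = (2*s)+1+1 from rfl, Function.iterate_succ_apply,
    Function.iterate_succ_apply, hstep1, hstep2]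
  exact Function.iterate_fixed rfl _

end Aux
lemma exists_game {n : ℕ} (f : (Fin n → Bool) → (Fin n → Bool) → Bool) :
    ∃ s : ℕ, ∃ G : GHGame n s, G.Computes f := by
  classical
  obtain ⟨e⟩ : Nonempty ((Fin n → Bool) ≃ Fin (2^n)) :=
    ⟨Fintype.equivFinOfCardEq (by simp)⟩
  have hN1 : 1 ≤ 2^n := Nat.one_le_two_pow
  refine ⟨2*2^n,
    { EA := fun x k =>
        if (k : ℕ) = 0 then some ⟨(e x : ℕ) + 1, by have := (e x).isLt; omega⟩
        else if (k : ℕ) = (e x : ℕ) + 1 then some ⟨0, by omega⟩ else none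
      EB := fun y i =>
        if h : (i : ℕ) < 2^n then
          (if f (e.symm ⟨(i : ℕ), h⟩) y then none
           else some ⟨2^n + (i : ℕ), by have := i.isLt; omega⟩)
        else
          (if f (e.symm ⟨(i : ℕ) - 2^n, by have := i.isLt; omega⟩) y then none
           else some ⟨(i : ℕ) - 2^n, by have := i.isLt; omega⟩)
      matchA := ?_
      matchB := ?_ }, ?_⟩
  · intro x i j hij
    dsimp only at hij
    by_cases h0 : (i : ℕ) = 0
    · rw [if_pos h0] at hij
      have hj : (j : ℕ) = (e x : ℕ) + 1 := by rw [← Option.some.inj hij]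
      refine ⟨fun hc => by rw [hc] at h0; omega, ?_⟩
      dsimp only
      rw [if_neg (by omega), if_pos hj]
      exact congrArg some (Fin.ext (by simp [h0]))
    · rw [if_neg h0] at hij
      by_cases h1 : (i : ℕ) = (e x : ℕ) + 1
      · rw [if_pos h1] at hij
        have hj : (j : ℕ) = 0 := by rw [← Option.some.inj hij]
        refine ⟨fun hc => by rw [hc] at h1; omega, ?_⟩
        dsimp only
        rw [if_pos hj]
        exact congrArg some (Fin.ext (by simp [h1]))
      · rw [if_neg h1] at hij
        exact absurd hij (by simp)
  · intro y i j hij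
    dsimp only at hij
    have hi := i.isLt
    by_cases h0 : (i : ℕ) < 2^n
    · rw [dif_pos h0] at hij
      by_cases h1 : f (e.symm ⟨(i : ℕ), h0⟩) y = true
      · rw [if_pos h1] at hij
        exact absurd hij (by simp)
      · rw [if_neg h1] at hij
        have hj : (j : ℕ) = 2^n + (i : ℕ) := by rw [← Option.some.inj hij]
        refine ⟨fun hc => by have := congrArg Fin.val hc; omega, ?_⟩
        dsimp only
        rw [dif_neg (by omega)]
        have harg : (⟨(j : ℕ) - 2^n, by have := j.isLt; omega⟩ : Fin (2^n))
            = ⟨(i : ℕ), h0⟩ := Fin.ext (by simp [hj])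
        rw [harg, if_neg h1]
        exact congrArg some (Fin.ext (by simp [hj]))
    · rw [dif_neg h0] at hij
      by_cases h2 : f (e.symm ⟨(i : ℕ) - 2^n, by omega⟩) y = true
      · rw [if_pos h2] at hij
        exact absurd hij (by simp)
      · rw [if_neg h2] at hij
        have hj : (j : ℕ) = (i : ℕ) - 2^n := by rw [← Option.some.inj hij]
        refine ⟨fun hc => by have := congrArg Fin.val hc; omega, ?_⟩
        dsimp only
        rw [dif_pos (by omega : (j : ℕ) < 2^n)]
        have harg : (⟨(j : ℕ), by omega⟩ : Fin (2^n))
            = ⟨(i : ℕ) - 2^n, by omega⟩ := Fin.ext (by simp [hj])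
        rw [harg, if_neg h2]
        exact congrArg some (Fin.ext (by simp [hj]; omega))
  · intro x y
    dsimp only [GHGame.run]
    have hex := (e x).isLt
    have hstart : ghStart (fun k : Fin (2*2^n+1) =>
        if (k : ℕ) = 0 then some (⟨(e x : ℕ) + 1, by omega⟩ : Fin (2*2^n+1))
        else if (k : ℕ) = (e x : ℕ) + 1 then some ⟨0, by omega⟩ else none)
        = GHState.atBob ⟨(e x : ℕ), by omega⟩ := by
      refine ghStart_eq_atBob (k := ⟨(e x : ℕ) + 1, by omega⟩) (by simp) ?_
      unfold toPipe
      rw [dif_neg (by simp)]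
      exact congrArg some (Fin.ext (by simp))
    cases hf : f x y
    · simp only [if_neg (by simp : ¬(false = true))]
      refine ghResult_exitA_of hstart (q := ⟨2^n + (e x : ℕ), by omega⟩) ?_ ?_
      · dsimp only
        rw [dif_pos (by exact hex)]
        rw [if_neg (by simp [hf])]
      · try dsimp only
        rw [if_neg (by simp [Fin.val_succ]), if_neg (by simp [Fin.val_succ])]
    · simp only [if_pos (rfl : (true : Bool) = true)]
      refine ghResult_exitB_of hstart ?_
      dsimp only
      rw [dif_pos (by exact hex)]
      rw [if_pos (by simp [hf])]
/-- Compact codes for partial matchings on `Fin m`: for each vertex we record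
its partner only when the partner is larger. -/
abbrev MCode (m : ℕ) := ∀ i : Fin m, Option (Fin (m - 1 - (i : ℕ)))

def encodeM {m : ℕ} (mm : Fin m → Option (Fin m)) : MCode m := fun i =>
  match mm i with
  | none => none
  | some j =>
    if h : (i : ℕ) < (j : ℕ) then some ⟨(j : ℕ) - (i : ℕ) - 1, by have := j.isLt; omega⟩
    else none

noncomputable def decodeM {m : ℕ} (c : MCode m) : Fin m → Option (Fin m) := fun i =>
  match c i with
  | some d => some ⟨(i : ℕ) + 1 + (d : ℕ), by have := d.isLt; have := i.isLt; omega⟩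
  | none =>
    if h : ∃ j : Fin m, ∃ d : Fin (m - 1 - (j : ℕ)),
        c j = some d ∧ (j : ℕ) + 1 + (d : ℕ) = (i : ℕ) then
      some h.choose
    else none

lemma encodeM_spec {m : ℕ} (mm : Fin m → Option (Fin m)) (i : Fin m)
    (d : Fin (m - 1 - (i : ℕ))) (h : encodeM mm i = some d) :
    ∃ j : Fin m, mm i = some j ∧ (j : ℕ) = (i : ℕ) + 1 + (d : ℕ) := by
  unfold encodeM at h
  cases hmi : mm i with
  | none => simp [hmi] at h
  | some j =>
    simp only [hmi] at h
    by_cases hij : (i : ℕ) < (j : ℕ)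
    · refine ⟨j, rfl, ?_⟩
      rw [dif_pos hij] at h
      have := Option.some.inj h
      have hval := congrArg Fin.val this
      simp at hval
      omega
    · rw [dif_neg hij] at h; simp at h

lemma encodeM_spec' {m : ℕ} (mm : Fin m → Option (Fin m)) {i j : Fin m}
    (hmi : mm i = some j) (hij : (i : ℕ) < (j : ℕ)) :
    ∃ d : Fin (m - 1 - (i : ℕ)), encodeM mm i = some d ∧ (i : ℕ) + 1 + (d : ℕ) = (j : ℕ) := by
  refine ⟨⟨(j : ℕ) - (i : ℕ) - 1, by have := j.isLt; omega⟩, ?_, by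
    have := j.isLt; simp; omega⟩
  unfold encodeM
  simp only [hmi]
  rw [dif_pos hij]

lemma decodeM_encodeM {m : ℕ} (mm : Fin m → Option (Fin m)) (h : IsPartialMatching mm) :
    decodeM (encodeM mm) = mm := by
  funext i
  unfold decodeM
  cases hc : encodeM mm i with
  | some d =>
    simp only [hc]
    obtain ⟨j, hij, hval⟩ := encodeM_spec mm i d hc
    rw [hij]
    exact congrArg some (Fin.ext (by simp [hval]))
  | none =>
    simp only [hc]
    by_cases hex : ∃ j : Fin m, ∃ d : Fin (m - 1 - (j : ℕ)),
        encodeM mm j = some d ∧ (j : ℕ) + 1 + (d : ℕ) = (i : ℕ)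
    · rw [dif_pos hex]
      obtain ⟨dc, hcjc, hsum⟩ := hex.choose_spec
      obtain ⟨j', hmj', hval'⟩ := encodeM_spec mm hex.choose dc hcjc
      have hj'i : j' = i := Fin.ext (by omega)
      rw [hj'i] at hmj'
      rw [(h hex.choose i hmj').2]
    · rw [dif_neg hex]
      cases hmi : mm i with
      | none => rfl
      | some j =>
        exfalso
        have hii := (h i j hmi).1
        have hji : mm j = some i := (h i j hmi).2
        rcases Nat.lt_or_ge (i : ℕ) (j : ℕ) with hij | hij
        · obtain ⟨d, hd, _⟩ := encodeM_spec' mm hmi hij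
          rw [hc] at hd; simp at hd
        · have hji' : (j : ℕ) < (i : ℕ) := by
            rcases Nat.lt_or_ge (j : ℕ) (i : ℕ) with h' | h'
            · exact h'
            · exact absurd (Fin.ext (by omega)) hii
          obtain ⟨d, hd, hsum⟩ := encodeM_spec' mm hji hji'
          exact hex ⟨j, d, hd, hsum⟩

lemma card_MCode (m : ℕ) : Fintype.card (MCode m) = Nat.factorial m := by
  rw [Fintype.card_pi]
  have h1 : ∀ i : Fin m, Fintype.card (Option (Fin (m - 1 - (i : ℕ))))
      = m - (i : ℕ) := by
    intro i
    have := i.isLt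
    simp [Fintype.card_option]
    omega
  calc (∏ i : Fin m, Fintype.card (Option (Fin (m - 1 - (i : ℕ)))))
      = (∏ i : Fin m, (m - (i : ℕ))) :=
        Finset.prod_congr rfl (fun i _ => h1 i)
    _ = (∏ i ∈ Finset.range m, (m - i)) := by
        rw [Fin.prod_univ_eq_prod_range]
    _ = Nat.factorial m := by
        have := Finset.prod_range_reflect (fun j => j + 1) m
        simp only [Nat.sub_sub] at this
        rw [show (∏ i ∈ Finset.range m, (m - i))
            = ∏ j ∈ Finset.range m, (m - (1 + j) + 1) from
          Finset.prod_congr rfl (fun j hj => by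
            have := Finset.mem_range.mp hj; omega), this,
          Finset.prod_range_add_one_eq_factorial]
lemma two_mul_factorial_le {s K : ℕ} (hK : 2 ≤ K) (hs : (s+1)^(s+1) ≤ K) :
    2 * (Nat.factorial (s+1) * Nat.factorial s) ≤ K^2 := by
  cases s with
  | zero =>
    simp [Nat.factorial]
    nlinarith
  | succ t =>
    have h1 : Nat.factorial (t+2) ≤ (t+2)^(t+2) := Nat.factorial_le_pow _
    have h2 : 2 * Nat.factorial (t+1) ≤ (t+2)^(t+2) := by
      have ha : Nat.factorial (t+1) ≤ (t+1)^(t+1) := Nat.factorial_le_pow _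
      have hb : (t+1)^(t+1) ≤ (t+2)^(t+1) := Nat.pow_le_pow_left (by omega) _
      calc 2 * Nat.factorial (t+1) ≤ 2 * (t+2)^(t+1) :=
            Nat.mul_le_mul_left 2 (le_trans ha hb)
        _ ≤ (t+2) * (t+2)^(t+1) := Nat.mul_le_mul_right _ (by omega)
        _ = (t+2)^(t+2) := by ring
    calc 2 * (Nat.factorial (t+2) * Nat.factorial (t+1))
        = Nat.factorial (t+2) * (2 * Nat.factorial (t+1)) := by ring
      _ ≤ K * K := Nat.mul_le_mul (le_trans h1 hs) (le_trans h2 hs)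
      _ = K^2 := (sq K).symm

lemma counting_contra (n : ℕ) (hn : 1 ≤ n)
    (H : ∀ f : (Fin n → Bool) → (Fin n → Bool) → Bool,
      (GH f + 1)^(GH f + 1) ≤ 2^(2^(n-1)) ∧ ∃ G : GHGame n (GH f), G.Computes f) :
    False := by
  classical
  set K := 2^(2^(n-1)) with hKdef
  have h2K : 2 ≤ K := by
    calc 2 = 2^1 := rfl
      _ ≤ 2^(2^(n-1)) := Nat.pow_le_pow_right (by norm_num) Nat.one_le_two_pow
  let run : (s : ℕ) → (((Fin n → Bool) → MCode (s+1)) × ((Fin n → Bool) → MCode s)) →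
      ((Fin n → Bool) → (Fin n → Bool) → Bool) := fun s p x y =>
    decide (ghResult (decodeM (p.1 x)) (decodeM (p.2 y)) = GHState.exitB)
  have hcover : ∀ f : (Fin n → Bool) → (Fin n → Bool) → Bool,
      ∃ s, s < K ∧ (s+1)^(s+1) ≤ K ∧ ∃ p, run s p = f := by
    intro f
    obtain ⟨hb, G, hG⟩ := H f
    refine ⟨GH f, ?_, hb, ⟨fun x => encodeM (G.EA x), fun y => encodeM (G.EB y)⟩, ?_⟩
    · have h1 : GH f + 1 ≤ (GH f + 1)^(GH f + 1) := Nat.le_self_pow (by omega) _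
      omega
    · funext x y
      show decide (ghResult (decodeM (encodeM (G.EA x))) (decodeM (encodeM (G.EB y)))
        = GHState.exitB) = f x y
      rw [decodeM_encodeM _ (G.matchA x), decodeM_encodeM _ (G.matchB y)]
      have := hG x y
      unfold GHGame.run at this
      rw [this]
      cases f x y <;> simp
  let bad : Finset ℕ := (Finset.range K).filter (fun s => (s+1)^(s+1) ≤ K)
  have hsub : (Finset.univ : Finset ((Fin n → Bool) → (Fin n → Bool) → Bool)) ⊆
      bad.biUnion (fun s => Finset.image (run s) Finset.univ) := by
    intro f _
    obtain ⟨s, hs1, hs2, p, hp⟩ := hcover f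
    exact Finset.mem_biUnion.mpr ⟨s,
      Finset.mem_filter.mpr ⟨Finset.mem_range.mpr hs1, hs2⟩,
      Finset.mem_image.mpr ⟨p, Finset.mem_univ _, hp⟩⟩
  have hcard2n : Fintype.card (Fin n → Bool) = 2^n := by simp
  have hbound : ∀ s ∈ bad, (Finset.image (run s) Finset.univ).card ≤
      (Nat.factorial (s+1) * Nat.factorial s)^(2^n) := by
    intro s _
    calc (Finset.image (run s) Finset.univ).card
        ≤ (Finset.univ : Finset (((Fin n → Bool) → MCode (s+1)) ×
            ((Fin n → Bool) → MCode s))).card := Finset.card_image_le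
      _ = Fintype.card (((Fin n → Bool) → MCode (s+1)) × ((Fin n → Bool) → MCode s)) :=
          Finset.card_univ
      _ = (Nat.factorial (s+1) * Nat.factorial s)^(2^n) := by
          simp only [Fintype.card_prod, Fintype.card_fun, card_MCode, Fintype.card_bool,
            Fintype.card_fin, ← mul_pow]
  have key : ∀ s ∈ bad, 2^(2^n) * ((Nat.factorial (s+1) * Nat.factorial s)^(2^n))
      ≤ 2^(2^n * 2^n) := by
    intro s hs
    obtain ⟨-, hb⟩ := Finset.mem_filter.mp hs
    have hfac := two_mul_factorial_le h2K hb
    have hnn : 2^(n-1) * 2 = 2^n := by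
      rw [← pow_succ]
      congr 1
      omega
    calc 2^(2^n) * ((Nat.factorial (s+1) * Nat.factorial s)^(2^n))
        = (2 * (Nat.factorial (s+1) * Nat.factorial s))^(2^n) :=
          (mul_pow 2 _ (2^n)).symm
      _ ≤ (K^2)^(2^n) := Nat.pow_le_pow_left hfac _
      _ = 2^(2^(n-1) * (2 * 2^n)) := by rw [hKdef, ← pow_mul, ← pow_mul]
      _ = 2^(2^n * 2^n) := by
          congr 1
          calc 2^(n-1) * (2 * 2^n) = (2^(n-1) * 2) * 2^n := by ring
            _ = 2^n * 2^n := by rw [hnn]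
  have hF : Fintype.card ((Fin n → Bool) → (Fin n → Bool) → Bool) = 2^(2^n * 2^n) := by
    rw [Fintype.card_fun, Fintype.card_fun, hcard2n, Fintype.card_bool, ← pow_mul]
  have hsum : 2^(2^n * 2^n) ≤ ∑ s ∈ bad, (Nat.factorial (s+1) * Nat.factorial s)^(2^n) := by
    calc 2^(2^n * 2^n) = (Finset.univ : Finset ((Fin n → Bool) → (Fin n → Bool) → Bool)).card := by
          rw [Finset.card_univ, hF]
      _ ≤ (bad.biUnion (fun s => Finset.image (run s) Finset.univ)).card :=
          Finset.card_le_card hsub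
      _ ≤ ∑ s ∈ bad, (Finset.image (run s) Finset.univ).card := Finset.card_biUnion_le
      _ ≤ ∑ s ∈ bad, (Nat.factorial (s+1) * Nat.factorial s)^(2^n) :=
          Finset.sum_le_sum hbound
  have hfinal : 2^(2^n) * (∑ s ∈ bad, (Nat.factorial (s+1) * Nat.factorial s)^(2^n))
      ≤ K * 2^(2^n * 2^n) := by
    rw [Finset.mul_sum]
    calc (∑ s ∈ bad, 2^(2^n) * (Nat.factorial (s+1) * Nat.factorial s)^(2^n))
        ≤ ∑ _s ∈ bad, 2^(2^n * 2^n) := Finset.sum_le_sum key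
      _ = bad.card * 2^(2^n * 2^n) := by rw [Finset.sum_const, smul_eq_mul]
      _ ≤ K * 2^(2^n * 2^n) := by
          refine Nat.mul_le_mul_right _ ?_
          calc bad.card ≤ (Finset.range K).card := Finset.card_filter_le _ _
            _ = K := Finset.card_range K
  have hKlt : K < 2^(2^n) := by
    refine Nat.pow_lt_pow_right (by norm_num) ?_
    exact Nat.pow_lt_pow_right (by norm_num) (by omega)
  have hTpos : 0 < 2^(2^n * 2^n) := Nat.pow_pos (by norm_num)
  have hchain : 2^(2^n) * 2^(2^n * 2^n) < 2^(2^n) * 2^(2^n * 2^n) := by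
    calc 2^(2^n) * 2^(2^n * 2^n)
        ≤ 2^(2^n) * (∑ s ∈ bad, (Nat.factorial (s+1) * Nat.factorial s)^(2^n)) :=
          Nat.mul_le_mul_left _ hsum
      _ ≤ K * 2^(2^n * 2^n) := hfinal
      _ < 2^(2^n) * 2^(2^n * 2^n) := (Nat.mul_lt_mul_right hTpos).mpr hKlt
  exact absurd hchain (lt_irrefl _)
lemma nat_bound_of_real {s n : ℕ} (hn : 1 ≤ n)
    (h : ((s : ℝ) + 1) * Real.logb 2 ((s : ℝ) + 1) < (2 : ℝ) ^ ((n : ℝ) - 1)) :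
    (s+1)^(s+1) ≤ 2^(2^(n-1)) := by
  have hs1 : (0 : ℝ) < (s : ℝ) + 1 := by positivity
  have hrw : (((s+1)^(s+1) : ℕ) : ℝ)
      = (2 : ℝ) ^ (((s : ℝ) + 1) * Real.logb 2 ((s : ℝ) + 1)) := by
    rw [mul_comm ((s : ℝ) + 1) (Real.logb 2 ((s : ℝ) + 1)),
      Real.rpow_mul (by norm_num), Real.rpow_logb (by norm_num) (by norm_num) hs1,
      show ((s : ℝ) + 1) = (((s+1 : ℕ)) : ℝ) by push_cast; ring, Real.rpow_natCast]
    push_cast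
    ring
  have hB : (2 : ℝ) ^ ((n : ℝ) - 1) = (((2^(n-1) : ℕ)) : ℝ) := by
    rw [show ((n : ℝ) - 1) = (((n-1 : ℕ)) : ℝ) by rw [Nat.cast_sub hn]; norm_num,
      Real.rpow_natCast]
    push_cast
    ring
  have hlt : (((s+1)^(s+1) : ℕ) : ℝ) < ((2^(2^(n-1)) : ℕ) : ℝ) := by
    rw [hrw]
    calc (2 : ℝ) ^ (((s : ℝ) + 1) * Real.logb 2 ((s : ℝ) + 1))
        < (2 : ℝ) ^ ((((2^(n-1) : ℕ)) : ℝ)) :=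
          Real.rpow_lt_rpow_of_exponent_lt (by norm_num) (hB ▸ h)
      _ = ((2^(2^(n-1)) : ℕ) : ℝ) := by rw [Real.rpow_natCast]; push_cast; ring
  exact le_of_lt (Nat.cast_lt.mp hlt)


/-- For every `n` there exists a Boolean function
`f : {0,1}^n × {0,1}^n → {0,1}` whose garden-hose complexity `s = GH f`
satisfies `(s + 1) · log₂ (s + 1) ≥ 2 ^ (n - 1)`; in particular there exist
functions with exponential garden-hose complexity. -/
theorem exists_gh_exponential (n : ℕ) :
    ∃ f : (Fin n → Bool) → (Fin n → Bool) → Bool,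
      (2 : ℝ) ^ ((n : ℝ) - 1) ≤
        ((GH f : ℝ) + 1) * Real.logb 2 ((GH f : ℝ) + 1) := by
  rcases Nat.eq_zero_or_pos n with hn | hn
  · subst hn
    refine ⟨fun _ _ => true, ?_⟩
    have h0 : ∀ G : GHGame 0 0, ¬ G.Computes (fun _ _ => true) := by
      intro G hG
      have hrun := hG (fun i => true) (fun i => true)
      simp only [if_pos] at hrun
      have hstart : ghStart (G.EA (fun i => true)) = GHState.exitA := by
        unfold ghStart
        cases h : G.EA (fun i => true) 0 with
        | none => simp
        | some k =>
          have hk : toPipe k = none := by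
            unfold toPipe
            rw [dif_pos (by omega : (k : ℕ) = 0)]
          simp [hk]
      have : G.run (fun i => true) (fun i => true) = GHState.exitA := by
        unfold GHGame.run ghResult
        rw [hstart]
        exact Function.iterate_fixed rfl _
      rw [this] at hrun
      exact absurd hrun (by simp)
    have hne : {s : ℕ | ∃ G : GHGame 0 s, G.Computes (fun _ _ => true)}.Nonempty := by
      obtain ⟨s, G, h⟩ := exists_game (fun _ _ => true)
      exact ⟨s, G, h⟩
    have hmem : ∃ G : GHGame 0 (GH (fun _ _ => true)), G.Computes (fun _ _ => true) :=
      Nat.sInf_mem hne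
    have hpos : 1 ≤ GH (fun (_ _ : Fin 0 → Bool) => true) := by
      rcases Nat.eq_zero_or_pos (GH (fun (_ _ : Fin 0 → Bool) => true)) with h | h
      · exact absurd (h ▸ hmem).choose_spec (h0 _)
      · exact h
    have h2 : (2 : ℝ) ≤ (GH (fun (_ _ : Fin 0 → Bool) => true) : ℝ) + 1 := by
      have : (1 : ℝ) ≤ (GH (fun (_ _ : Fin 0 → Bool) => true) : ℝ) := by exact_mod_cast hpos
      linarith
    have hlogb : (1 : ℝ) ≤ Real.logb 2 ((GH (fun (_ _ : Fin 0 → Bool) => true) : ℝ) + 1) := by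
      have hmono := Real.logb_le_logb_of_le (b := 2) (by norm_num : (1:ℝ) < 2)
        (by norm_num : (0:ℝ) < 2) h2
      rwa [Real.logb_self_eq_one (by norm_num : (1:ℝ) < 2)] at hmono
    calc (2 : ℝ) ^ (((0 : ℕ) : ℝ) - 1) ≤ 2 ^ (0 : ℝ) := by
          apply Real.rpow_le_rpow_of_exponent_le (by norm_num)
          norm_num
      _ = 1 := Real.rpow_zero 2
      _ ≤ 2 * 1 := by norm_num
      _ ≤ ((GH (fun (_ _ : Fin 0 → Bool) => true) : ℝ) + 1) *
            Real.logb 2 ((GH (fun (_ _ : Fin 0 → Bool) => true) : ℝ) + 1) := by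
          apply mul_le_mul h2 hlogb (by norm_num) (by linarith)
  · by_contra hcon
    push_neg at hcon
    refine counting_contra n hn (fun f => ⟨?_, ?_⟩)
    · exact nat_bound_of_real hn (hcon f)
    · have hne : {s : ℕ | ∃ G : GHGame n s, G.Computes f}.Nonempty := by
        obtain ⟨s, G, h⟩ := exists_game f
        exact ⟨s, G, h⟩
      exact Nat.sInf_mem hne
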